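/- Let J be a joint distribution of (p1, p2, y) in [0,1] × [0,1] × {0,1}, with marginals D1 of (p1, y) and D2 of (p2, y). Then |SCDL(D1)^2 - SCDL(D2)^2| ≤ C·E_J[|p1 - p2|], and consequently |SCDL(D1) - SCDL(D2)| ≤ C'·sqrt(E_J[|p1 - p2|]), for absolute constants C, C'. In particular, SCDL is 1/2-Hölder continuous in the predictions under the L1 coupling distance. -/

import Mathlib

open Finset

/-- Triangular weight function `w_i(x) = max(1 - |m·x - i|, 0)`. -/
noncomputable def tri (m i : ℕ) (x : ℝ) : ℝ := max (1 - |(m : ℝ) * x - (i : ℝ)|) 0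

/-- Bin weight `π_i = E[w_i(p)]` for a finitely supported distribution given by
a finite set `J` of atoms with probabilities `ν` and prediction map `p`. -/
noncomputable def binW {α : Type*} (m : ℕ) (J : Finset α) (ν : α → ℝ) (p : α → ℝ)
    (i : ℕ) : ℝ :=
  ∑ z ∈ J, ν z * tri m i (p z)

/-- Bin conditional mean `q_i = E[w_i(p)·y] / π_i` (zero if `π_i = 0`, by the
convention of division by zero). -/
noncomputable def binQ {α : Type*} (m : ℕ) (J : Finset α) (ν : α → ℝ) (p y : α → ℝ)
    (i : ℕ) : ℝ :=
  (∑ z ∈ J, ν z * tri m i (p z) * y z) / binW m J ν p i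

/-- Soft-binned calibration fixed decision loss at index `i`:
`Σ_{j≤i} π_j·max(q_j - (i+1)/m, 0) + Σ_{j>i} π_j·max(i/m - q_j, 0)`. -/
noncomputable def SCFDL {α : Type*} (m : ℕ) (J : Finset α) (ν : α → ℝ) (p y : α → ℝ)
    (i : ℕ) : ℝ :=
  ∑ j ∈ Finset.range (i + 1), binW m J ν p j * max (binQ m J ν p y j - ((i : ℝ) + 1) / m) 0
    + ∑ j ∈ Finset.Icc (i + 1) m, binW m J ν p j * max ((i : ℝ) / m - binQ m J ν p y j) 0

/-- `SCDL_m(D) = max_{i=0,...,m} SCFDL_{m,i}(D)`. -/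
noncomputable def SCDLm {α : Type*} (m : ℕ) (J : Finset α) (ν : α → ℝ) (p y : α → ℝ) : ℝ :=
  Finset.sup' (Finset.range (m + 1)) (Finset.nonempty_range_iff.mpr (Nat.succ_ne_zero m))
    (SCFDL m J ν p y)

/-- `SCDL(D) = inf over m ∈ {2,4,8,...} of max(SCDL_m(D), 1/m)`. -/
noncomputable def SCDL {α : Type*} (J : Finset α) (ν : α → ℝ) (p y : α → ℝ) : ℝ :=
  ⨅ k : ℕ, max (SCDLm (2 ^ (k + 1)) J ν p y) (1 / 2 ^ (k + 1))

lemma tri_nonneg (m i : ℕ) (x : ℝ) : 0 ≤ tri m i x := le_max_right _ _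

lemma tri_le_one (m i : ℕ) (x : ℝ) : tri m i x ≤ 1 :=
  max_le (by linarith [abs_nonneg ((m:ℝ)*x - i)]) zero_le_one

lemma tri_lip (m i : ℕ) (a b : ℝ) : |tri m i a - tri m i b| ≤ m * |a - b| := by
  unfold tri
  calc |max (1 - |(m:ℝ)*a - i|) 0 - max (1 - |(m:ℝ)*b - i|) 0|
      ≤ |(1 - |(m:ℝ)*a - i|) - (1 - |(m:ℝ)*b - i|)| := abs_max_sub_max_le_abs _ _ _
    _ ≤ |((m:ℝ)*b - i) - ((m:ℝ)*a - i)| := by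
        rw [show (1 - |(m:ℝ)*a - i|) - (1 - |(m:ℝ)*b - i|)
          = |(m:ℝ)*b - i| - |(m:ℝ)*a - i| by ring]
        exact abs_abs_sub_abs_le_abs_sub _ _
    _ = (m:ℝ) * |a - b| := by
        rw [show ((m:ℝ)*b - i) - ((m:ℝ)*a - i) = (m:ℝ)*(b-a) by ring, abs_mul,
          Nat.abs_cast, abs_sub_comm]

lemma tri_supp {m i : ℕ} {x : ℝ} (h : tri m i x ≠ 0) : |(m:ℝ)*x - i| < 1 := by
  by_contra hc
  exact h (max_eq_right (by linarith [not_lt.mp hc]))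

lemma tri_window {m i : ℕ} {x : ℝ} (hx : 0 ≤ x) (h : tri m i x ≠ 0) :
    i = ⌊(m:ℝ)*x⌋₊ ∨ i = ⌊(m:ℝ)*x⌋₊ + 1 := by
  have h1 := tri_supp h
  have hmx : 0 ≤ (m:ℝ)*x := by positivity
  have hf1 : ((⌊(m:ℝ)*x⌋₊ : ℝ)) ≤ (m:ℝ)*x := Nat.floor_le hmx
  have hf2 : (m:ℝ)*x < ⌊(m:ℝ)*x⌋₊ + 1 := Nat.lt_floor_add_one _
  rw [abs_lt] at h1
  have hi1 : (i:ℝ) < (⌊(m:ℝ)*x⌋₊ : ℝ) + 2 := by linarith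
  have hi2 : ((⌊(m:ℝ)*x⌋₊:ℝ)) < (i:ℝ) + 1 := by linarith
  have hi1' : i < ⌊(m:ℝ)*x⌋₊ + 2 := by exact_mod_cast hi1
  have hi2' : ⌊(m:ℝ)*x⌋₊ < i + 1 := by exact_mod_cast hi2
  omega

lemma tri_vanish {m' j : ℕ} {x : ℝ} (hx : x ≤ 1) (hj : m' + 1 ≤ j) : tri m' j x = 0 := by
  apply max_eq_right
  have h1 : (m':ℝ)*x ≤ m' := by
    nlinarith [Nat.cast_nonneg (α := ℝ) m']
  have hj' : (m':ℝ) + 1 ≤ (j:ℝ) := by exact_mod_cast hj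
  have h2 : (m':ℝ)*x - j ≤ -1 := by linarith
  have h3 : (1:ℝ) ≤ |(m':ℝ)*x - j| := le_trans (by linarith) (neg_le_abs _)
  linarith

lemma sum_abs_tri_sub (m : ℕ) {a b : ℝ} (ha : 0 ≤ a) (hb : 0 ≤ b) :
    ∑ j ∈ range (m+1), |tri m j a - tri m j b| ≤ 4 * m * |a - b| := by
  classical
  set S : Finset ℕ := {⌊(m:ℝ)*a⌋₊, ⌊(m:ℝ)*a⌋₊ + 1, ⌊(m:ℝ)*b⌋₊, ⌊(m:ℝ)*b⌋₊ + 1} with hSdef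
  have hS : ∀ j ∈ range (m+1), |tri m j a - tri m j b| ≠ 0 → j ∈ S := by
    intro j _ hj
    have hor : tri m j a ≠ 0 ∨ tri m j b ≠ 0 := by
      by_contra hc
      push_neg at hc
      rw [hc.1, hc.2] at hj
      simp at hj
    rcases hor with h | h
    · rcases tri_window ha h with h' | h' <;> simp [hSdef, h']
    · rcases tri_window hb h with h' | h' <;> simp [hSdef, h']
  have hcard : (((range (m+1)).filter (· ∈ S)).card : ℝ) ≤ 4 := by
    have h1 : ((range (m+1)).filter (· ∈ S)).card ≤ S.card :=
      Finset.card_le_card (fun x hx => (Finset.mem_filter.mp hx).2)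
    have h2 : S.card ≤ 4 := by
      refine le_trans (Finset.card_insert_le _ _) (Nat.succ_le_succ ?_)
      refine le_trans (Finset.card_insert_le _ _) (Nat.succ_le_succ ?_)
      refine le_trans (Finset.card_insert_le _ _) (Nat.succ_le_succ ?_)
      simp
    exact_mod_cast le_trans h1 h2
  calc ∑ j ∈ range (m+1), |tri m j a - tri m j b|
      = ∑ j ∈ (range (m+1)).filter (· ∈ S), |tri m j a - tri m j b| :=
        (Finset.sum_filter_of_ne hS).symm
    _ ≤ ∑ _j ∈ (range (m+1)).filter (· ∈ S), (m:ℝ) * |a - b| :=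
        Finset.sum_le_sum fun j _ => tri_lip m j a b
    _ = (((range (m+1)).filter (· ∈ S)).card : ℝ) * ((m:ℝ) * |a-b|) := by
        rw [Finset.sum_const, nsmul_eq_mul]
    _ ≤ 4 * ((m:ℝ) * |a-b|) := by
        have : (0:ℝ) ≤ (m:ℝ) * |a-b| := by positivity
        exact mul_le_mul_of_nonneg_right hcard this
    _ = 4 * m * |a-b| := by ring

lemma sum_tri_le_two (m : ℕ) {x : ℝ} (hx : 0 ≤ x) :
    ∑ j ∈ range (m+1), tri m j x ≤ 2 := by
  classical
  set S : Finset ℕ := {⌊(m:ℝ)*x⌋₊, ⌊(m:ℝ)*x⌋₊ + 1} with hSdef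
  have hS : ∀ j ∈ range (m+1), tri m j x ≠ 0 → j ∈ S := by
    intro j _ hj
    rcases tri_window hx hj with h' | h' <;> simp [hSdef, h']
  calc ∑ j ∈ range (m+1), tri m j x
      = ∑ j ∈ (range (m+1)).filter (· ∈ S), tri m j x := (Finset.sum_filter_of_ne hS).symm
    _ ≤ ∑ _j ∈ (range (m+1)).filter (· ∈ S), 1 :=
        Finset.sum_le_sum fun j _ => tri_le_one m j x
    _ = (((range (m+1)).filter (· ∈ S)).card : ℝ) := by rw [Finset.sum_const, nsmul_eq_mul, mul_one]
    _ ≤ 2 := by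
        have h1 : ((range (m+1)).filter (· ∈ S)).card ≤ S.card :=
          Finset.card_le_card (fun x hx => (Finset.mem_filter.mp hx).2)
        have h2 : S.card ≤ 2 :=
          le_trans (Finset.card_insert_le _ _) (Nat.succ_le_succ (by simp))
        exact_mod_cast le_trans h1 h2

lemma tent_eq (s : ℝ) : max (1 - |s|) 0 = (|s+1| + |s-1| - 2*|s|)/2 := by
  rcases abs_cases s with ⟨h1,h2⟩|⟨h1,h2⟩ <;>
  rcases abs_cases (s+1) with ⟨h3,h4⟩|⟨h3,h4⟩ <;>
  rcases abs_cases (s-1) with ⟨h5,h6⟩|⟨h5,h6⟩ <;>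
  rcases max_cases (1 - |s|) (0:ℝ) with ⟨h7,h8⟩|⟨h7,h8⟩ <;>
  rw [h7] <;> linarith

lemma tent_halving (s : ℝ) :
    max (1 - |s|) 0 = 2⁻¹ * max (1 - |2*s+1|) 0 + max (1 - |2*s|) 0
      + 2⁻¹ * max (1 - |2*s-1|) 0 := by
  rw [tent_eq, tent_eq, tent_eq, tent_eq]
  have e1 : |2*s+1+1| = 2*|s+1| := by
    rw [show (2*s+1+1) = 2*(s+1) by ring, abs_mul]; norm_num
  have e2 : |2*s+1-1| = 2*|s| := by
    rw [show (2*s+1-1) = 2*s by ring, abs_mul]; norm_num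
  have e3 : |2*s-1+1| = 2*|s| := by
    rw [show (2*s-1+1) = 2*s by ring, abs_mul]; norm_num
  have e4 : |2*s-1-1| = 2*|s-1| := by
    rw [show (2*s-1-1) = 2*(s-1) by ring, abs_mul]; norm_num
  have e5 : |2*s| = 2*|s| := by rw [abs_mul]; norm_num
  rw [e1, e2, e3, e4, e5]
  ring

lemma tri_halving_succ (m j : ℕ) (x : ℝ) :
    tri m (j+1) x = 2⁻¹ * tri (2*m) (2*j+1) x + tri (2*m) (2*j+2) x
      + 2⁻¹ * tri (2*m) (2*j+3) x := by
  unfold tri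
  have h := tent_halving ((m:ℝ)*x - (j+1))
  have c1 : ((2*m : ℕ):ℝ) * x - ((2*j+1 : ℕ):ℝ) = 2*((m:ℝ)*x - (j+1)) + 1 := by
    push_cast; ring
  have c2 : ((2*m : ℕ):ℝ) * x - ((2*j+2 : ℕ):ℝ) = 2*((m:ℝ)*x - (j+1)) := by
    push_cast; ring
  have c3 : ((2*m : ℕ):ℝ) * x - ((2*j+3 : ℕ):ℝ) = 2*((m:ℝ)*x - (j+1)) - 1 := by
    push_cast; ring
  rw [c1, c2, c3]
  have c0 : (m:ℝ)*x - ((j:ℝ)+1) = (m:ℝ)*x - (((j+1 : ℕ)):ℝ) := by push_cast; ring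
  push_cast
  push_cast at h
  exact h

lemma tri_halving_zero (m : ℕ) {x : ℝ} (hx : 0 ≤ x) :
    tri m 0 x = tri (2*m) 0 x + 2⁻¹ * tri (2*m) 1 x := by
  unfold tri
  have h := tent_halving ((m:ℝ)*x)
  have c1 : ((2*m : ℕ):ℝ) * x - ((0 : ℕ):ℝ) = 2*((m:ℝ)*x) := by push_cast; ring
  have c2 : ((2*m : ℕ):ℝ) * x - ((1 : ℕ):ℝ) = 2*((m:ℝ)*x) - 1 := by push_cast; ring
  have hz : max (1 - |2*((m:ℝ)*x)+1|) 0 = 0 := by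
    apply max_eq_right
    have : 0 ≤ (m:ℝ)*x := by positivity
    rw [abs_of_nonneg (by linarith)]
    linarith
  rw [c1, c2]
  simp only [Nat.cast_zero, sub_zero] at *
  rw [h, hz]
  ring

noncomputable def binA {α : Type*} (m : ℕ) (J : Finset α) (ν : α → ℝ) (p y : α → ℝ)
    (i : ℕ) : ℝ :=
  ∑ z ∈ J, ν z * tri m i (p z) * y z

section bins

variable {α : Type} {J : Finset α} {ν p y : α → ℝ}

lemma binW_nonneg (hν : ∀ z ∈ J, 0 ≤ ν z) (m i : ℕ) : 0 ≤ binW m J ν p i :=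
  Finset.sum_nonneg fun z hz => mul_nonneg (hν z hz) (tri_nonneg _ _ _)

lemma binA_nonneg (hν : ∀ z ∈ J, 0 ≤ ν z) (hy : ∀ z ∈ J, y z = 0 ∨ y z = 1) (m i : ℕ) :
    0 ≤ binA m J ν p y i :=
  Finset.sum_nonneg fun z hz => mul_nonneg (mul_nonneg (hν z hz) (tri_nonneg _ _ _))
    (by rcases hy z hz with h | h <;> rw [h] <;> norm_num)

lemma binA_le_binW (hν : ∀ z ∈ J, 0 ≤ ν z) (hy : ∀ z ∈ J, y z = 0 ∨ y z = 1) (m i : ℕ) :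
    binA m J ν p y i ≤ binW m J ν p i := by
  apply Finset.sum_le_sum
  intro z hz
  have h1 : 0 ≤ ν z * tri m i (p z) := mul_nonneg (hν z hz) (tri_nonneg _ _ _)
  have h2 : y z ≤ 1 := by rcases hy z hz with h | h <;> rw [h] <;> norm_num
  calc ν z * tri m i (p z) * y z ≤ ν z * tri m i (p z) * 1 :=
        mul_le_mul_of_nonneg_left h2 h1
    _ = ν z * tri m i (p z) := mul_one _

lemma binA_eq_zero (hν : ∀ z ∈ J, 0 ≤ ν z) {m i : ℕ} (h : binW m J ν p i = 0) :
    binA m J ν p y i = 0 := by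
  have hterm : ∀ z ∈ J, ν z * tri m i (p z) = 0 :=
    (Finset.sum_eq_zero_iff_of_nonneg
      (fun z hz => mul_nonneg (hν z hz) (tri_nonneg _ _ _))).mp h
  exact Finset.sum_eq_zero fun z hz => by rw [hterm z hz, zero_mul]

lemma upper_term (hν : ∀ z ∈ J, 0 ≤ ν z) {t : ℝ} (_ht : 0 ≤ t) (m j : ℕ) :
    binW m J ν p j * max (binQ m J ν p y j - t) 0
      = max (binA m J ν p y j - t * binW m J ν p j) 0 := by
  by_cases hW : binW m J ν p j = 0
  · rw [hW, binA_eq_zero hν hW, zero_mul]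
    norm_num
  · have hWpos : 0 < binW m J ν p j := lt_of_le_of_ne (binW_nonneg hν m j) (Ne.symm hW)
    have hQ : binQ m J ν p y j = binA m J ν p y j / binW m J ν p j := rfl
    rw [hQ, mul_max_of_nonneg _ _ hWpos.le, mul_zero, mul_sub,
      mul_div_cancel₀ _ hW, mul_comm (binW m J ν p j) t]

lemma lower_term (hν : ∀ z ∈ J, 0 ≤ ν z) (s : ℝ) (m j : ℕ) :
    binW m J ν p j * max (s - binQ m J ν p y j) 0
      = max (s * binW m J ν p j - binA m J ν p y j) 0 := by
  by_cases hW : binW m J ν p j = 0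
  · rw [hW, binA_eq_zero hν hW, zero_mul]
    norm_num
  · have hWpos : 0 < binW m J ν p j := lt_of_le_of_ne (binW_nonneg hν m j) (Ne.symm hW)
    have hQ : binQ m J ν p y j = binA m J ν p y j / binW m J ν p j := rfl
    rw [hQ, mul_max_of_nonneg _ _ hWpos.le, mul_zero, mul_sub,
      mul_div_cancel₀ _ hW, mul_comm (binW m J ν p j) s]

lemma SCFDL_eq (hν : ∀ z ∈ J, 0 ≤ ν z) (m i : ℕ) :
    SCFDL m J ν p y i
      = ∑ j ∈ range (i + 1), max (binA m J ν p y j - ((i:ℝ)+1)/m * binW m J ν p j) 0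
        + ∑ j ∈ Finset.Icc (i + 1) m, max ((i:ℝ)/m * binW m J ν p j - binA m J ν p y j) 0 := by
  unfold SCFDL
  congr 1
  · exact Finset.sum_congr rfl fun j _ =>
      upper_term hν (div_nonneg (by positivity) (Nat.cast_nonneg m)) m j
  · exact Finset.sum_congr rfl fun j _ => lower_term hν _ m j

end bins

section lip

variable {α : Type} {J : Finset α} {ν p₁ p₂ y : α → ℝ}

lemma sum_abs_gen_sub (hν : ∀ z ∈ J, 0 ≤ ν z)
    (hp₁ : ∀ z ∈ J, 0 ≤ p₁ z) (hp₂ : ∀ z ∈ J, 0 ≤ p₂ z)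
    (c : α → ℝ) (hc : ∀ z ∈ J, |c z| ≤ 1) (m : ℕ) :
    ∑ j ∈ range (m+1), |(∑ z ∈ J, ν z * tri m j (p₁ z) * c z)
        - ∑ z ∈ J, ν z * tri m j (p₂ z) * c z|
      ≤ 4 * m * ∑ z ∈ J, ν z * |p₁ z - p₂ z| := by
  have step1 : ∀ j, |(∑ z ∈ J, ν z * tri m j (p₁ z) * c z)
        - ∑ z ∈ J, ν z * tri m j (p₂ z) * c z|
      ≤ ∑ z ∈ J, ν z * |tri m j (p₁ z) - tri m j (p₂ z)| := by
    intro j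
    rw [← Finset.sum_sub_distrib]
    refine le_trans (Finset.abs_sum_le_sum_abs _ _) (Finset.sum_le_sum fun z hz => ?_)
    rw [show ν z * tri m j (p₁ z) * c z - ν z * tri m j (p₂ z) * c z
      = ν z * (tri m j (p₁ z) - tri m j (p₂ z)) * c z by ring, abs_mul, abs_mul,
      abs_of_nonneg (hν z hz)]
    calc ν z * |tri m j (p₁ z) - tri m j (p₂ z)| * |c z|
        ≤ ν z * |tri m j (p₁ z) - tri m j (p₂ z)| * 1 :=
          mul_le_mul_of_nonneg_left (hc z hz) (mul_nonneg (hν z hz) (abs_nonneg _))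
      _ = ν z * |tri m j (p₁ z) - tri m j (p₂ z)| := mul_one _
  calc ∑ j ∈ range (m+1), |(∑ z ∈ J, ν z * tri m j (p₁ z) * c z)
        - ∑ z ∈ J, ν z * tri m j (p₂ z) * c z|
      ≤ ∑ j ∈ range (m+1), ∑ z ∈ J, ν z * |tri m j (p₁ z) - tri m j (p₂ z)| :=
        Finset.sum_le_sum fun j _ => step1 j
    _ = ∑ z ∈ J, ν z * ∑ j ∈ range (m+1), |tri m j (p₁ z) - tri m j (p₂ z)| := by
        rw [Finset.sum_comm]
        exact Finset.sum_congr rfl fun z _ => by rw [Finset.mul_sum]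
    _ ≤ ∑ z ∈ J, ν z * (4 * m * |p₁ z - p₂ z|) :=
        Finset.sum_le_sum fun z hz => mul_le_mul_of_nonneg_left
          (sum_abs_tri_sub m (hp₁ z hz) (hp₂ z hz)) (hν z hz)
    _ = 4 * m * ∑ z ∈ J, ν z * |p₁ z - p₂ z| := by
        rw [Finset.mul_sum]; exact Finset.sum_congr rfl fun z _ => by ring

lemma sum_abs_binW_sub (hν : ∀ z ∈ J, 0 ≤ ν z)
    (hp₁ : ∀ z ∈ J, 0 ≤ p₁ z) (hp₂ : ∀ z ∈ J, 0 ≤ p₂ z) (m : ℕ) :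
    ∑ j ∈ range (m+1), |binW m J ν p₁ j - binW m J ν p₂ j|
      ≤ 4 * m * ∑ z ∈ J, ν z * |p₁ z - p₂ z| := by
  have h := sum_abs_gen_sub hν hp₁ hp₂ (fun _ => 1) (fun z _ => by norm_num) m
  simpa [binW, mul_one] using h

lemma sum_abs_binA_sub (hν : ∀ z ∈ J, 0 ≤ ν z)
    (hp₁ : ∀ z ∈ J, 0 ≤ p₁ z) (hp₂ : ∀ z ∈ J, 0 ≤ p₂ z)
    (hy : ∀ z ∈ J, y z = 0 ∨ y z = 1) (m : ℕ) :
    ∑ j ∈ range (m+1), |binA m J ν p₁ y j - binA m J ν p₂ y j|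
      ≤ 4 * m * ∑ z ∈ J, ν z * |p₁ z - p₂ z| := by
  exact sum_abs_gen_sub hν hp₁ hp₂ y
    (fun z hz => by rcases hy z hz with h | h <;> rw [h] <;> norm_num) m

lemma SCFDL_le_SCFDL_add (hν : ∀ z ∈ J, 0 ≤ ν z)
    (hp₁ : ∀ z ∈ J, 0 ≤ p₁ z) (hp₂ : ∀ z ∈ J, 0 ≤ p₂ z)
    (hy : ∀ z ∈ J, y z = 0 ∨ y z = 1) {m i : ℕ} (hm : 1 ≤ m) (hi : i ≤ m) :
    SCFDL m J ν p₁ y i ≤ SCFDL m J ν p₂ y i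
      + 12 * m * ∑ z ∈ J, ν z * |p₁ z - p₂ z| := by
  have hm0 : (0:ℝ) < m := by exact_mod_cast hm
  have hT2 : ((i:ℝ)+1)/m ≤ 2 := by
    rw [div_le_iff₀ hm0]
    have h1 : (i:ℝ) ≤ m := by exact_mod_cast hi
    have h2 : (1:ℝ) ≤ m := by exact_mod_cast hm
    linarith
  have hS1 : (i:ℝ)/m ≤ 1 := by
    rw [div_le_one hm0]
    exact_mod_cast hi
  have hT0 : (0:ℝ) ≤ ((i:ℝ)+1)/m := by positivity
  have hS0 : (0:ℝ) ≤ (i:ℝ)/m := by positivity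
  set g : ℕ → ℝ := fun j => |binA m J ν p₁ y j - binA m J ν p₂ y j|
    + 2 * |binW m J ν p₁ j - binW m J ν p₂ j| with hg
  have hup : ∀ j, max (binA m J ν p₁ y j - ((i:ℝ)+1)/m * binW m J ν p₁ j) 0
      ≤ max (binA m J ν p₂ y j - ((i:ℝ)+1)/m * binW m J ν p₂ j) 0 + g j := by
    intro j
    have h1 := abs_max_sub_max_le_abs
      (binA m J ν p₁ y j - ((i:ℝ)+1)/m * binW m J ν p₁ j)
      (binA m J ν p₂ y j - ((i:ℝ)+1)/m * binW m J ν p₂ j) 0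
    have h2 : |(binA m J ν p₁ y j - ((i:ℝ)+1)/m * binW m J ν p₁ j)
        - (binA m J ν p₂ y j - ((i:ℝ)+1)/m * binW m J ν p₂ j)| ≤ g j := by
      rw [show (binA m J ν p₁ y j - ((i:ℝ)+1)/m * binW m J ν p₁ j)
        - (binA m J ν p₂ y j - ((i:ℝ)+1)/m * binW m J ν p₂ j)
        = (binA m J ν p₁ y j - binA m J ν p₂ y j)
          + (-(((i:ℝ)+1)/m)) * (binW m J ν p₁ j - binW m J ν p₂ j) by ring]
      refine le_trans (abs_add_le _ _) ?_
      rw [abs_mul, abs_neg, abs_of_nonneg hT0, hg]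
      have := abs_nonneg (binW m J ν p₁ j - binW m J ν p₂ j)
      simp only []
      nlinarith
    have := abs_le.mp (le_trans h1 h2)
    linarith [this.2]
  have hlo : ∀ j, max ((i:ℝ)/m * binW m J ν p₁ j - binA m J ν p₁ y j) 0
      ≤ max ((i:ℝ)/m * binW m J ν p₂ j - binA m J ν p₂ y j) 0 + g j := by
    intro j
    have h1 := abs_max_sub_max_le_abs
      ((i:ℝ)/m * binW m J ν p₁ j - binA m J ν p₁ y j)
      ((i:ℝ)/m * binW m J ν p₂ j - binA m J ν p₂ y j) 0
    have h2 : |((i:ℝ)/m * binW m J ν p₁ j - binA m J ν p₁ y j)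
        - ((i:ℝ)/m * binW m J ν p₂ j - binA m J ν p₂ y j)| ≤ g j := by
      rw [show ((i:ℝ)/m * binW m J ν p₁ j - binA m J ν p₁ y j)
        - ((i:ℝ)/m * binW m J ν p₂ j - binA m J ν p₂ y j)
        = (-(1:ℝ)) * (binA m J ν p₁ y j - binA m J ν p₂ y j)
          + ((i:ℝ)/m) * (binW m J ν p₁ j - binW m J ν p₂ j) by ring]
      refine le_trans (abs_add_le _ _) ?_
      rw [abs_mul, abs_mul, abs_of_nonneg hS0, hg]
      have h3 := abs_nonneg (binW m J ν p₁ j - binW m J ν p₂ j)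
      have h4 := abs_nonneg (binA m J ν p₁ y j - binA m J ν p₂ y j)
      simp only [abs_neg, abs_one, one_mul]
      nlinarith
    have := abs_le.mp (le_trans h1 h2)
    linarith [this.2]
  have hmerge : ∑ j ∈ range (i+1), g j + ∑ j ∈ Finset.Icc (i+1) m, g j
      = ∑ j ∈ range (m+1), g j := by
    rw [show Finset.Icc (i+1) m = Finset.Ico (i+1) (m+1) from by rw [Finset.Ico_add_one_right_eq_Icc],
      Finset.range_eq_Ico, Finset.range_eq_Ico]
    exact Finset.sum_Ico_consecutive _ (Nat.zero_le _) (by omega)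
  have hgsum : ∑ j ∈ range (m+1), g j ≤ 12 * m * ∑ z ∈ J, ν z * |p₁ z - p₂ z| := by
    rw [hg, Finset.sum_add_distrib]
    have hA := sum_abs_binA_sub hν hp₁ hp₂ hy m
    have hW := sum_abs_binW_sub hν hp₁ hp₂ m
    have : ∑ j ∈ range (m+1), 2 * |binW m J ν p₁ j - binW m J ν p₂ j|
        = 2 * ∑ j ∈ range (m+1), |binW m J ν p₁ j - binW m J ν p₂ j| := by
      rw [Finset.mul_sum]
    rw [this]
    linarith
  rw [SCFDL_eq hν, SCFDL_eq hν]
  have h1 : ∑ j ∈ range (i+1), max (binA m J ν p₁ y j - ((i:ℝ)+1)/m * binW m J ν p₁ j) 0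
      ≤ ∑ j ∈ range (i+1), max (binA m J ν p₂ y j - ((i:ℝ)+1)/m * binW m J ν p₂ j) 0
        + ∑ j ∈ range (i+1), g j := by
    rw [← Finset.sum_add_distrib]
    exact Finset.sum_le_sum fun j _ => hup j
  have h2 : ∑ j ∈ Finset.Icc (i+1) m, max ((i:ℝ)/m * binW m J ν p₁ j - binA m J ν p₁ y j) 0
      ≤ ∑ j ∈ Finset.Icc (i+1) m, max ((i:ℝ)/m * binW m J ν p₂ j - binA m J ν p₂ y j) 0
        + ∑ j ∈ Finset.Icc (i+1) m, g j := by
    rw [← Finset.sum_add_distrib]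
    exact Finset.sum_le_sum fun j _ => hlo j
  linarith [hgsum, hmerge, h1, h2]

end lip

section bounds

variable {α : Type} {J : Finset α} {ν p p₁ p₂ y : α → ℝ}

lemma binQ_nonneg (hν : ∀ z ∈ J, 0 ≤ ν z) (hy : ∀ z ∈ J, y z = 0 ∨ y z = 1) (m j : ℕ) :
    0 ≤ binQ m J ν p y j :=
  div_nonneg (binA_nonneg hν hy m j) (binW_nonneg hν m j)

lemma binQ_le_one (hν : ∀ z ∈ J, 0 ≤ ν z) (hy : ∀ z ∈ J, y z = 0 ∨ y z = 1) (m j : ℕ) :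
    binQ m J ν p y j ≤ 1 := by
  by_cases hW : binW m J ν p j = 0
  · have : binQ m J ν p y j = binA m J ν p y j / binW m J ν p j := rfl
    rw [this, hW, div_zero]
    norm_num
  · have hWpos : 0 < binW m J ν p j := lt_of_le_of_ne (binW_nonneg hν m j) (Ne.symm hW)
    have : binQ m J ν p y j = binA m J ν p y j / binW m J ν p j := rfl
    rw [this, div_le_one hWpos]
    exact binA_le_binW hν hy m j

lemma SCFDL_nonneg (hν : ∀ z ∈ J, 0 ≤ ν z) (m i : ℕ) :
    0 ≤ SCFDL m J ν p y i :=
  add_nonneg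
    (Finset.sum_nonneg fun j _ => mul_nonneg (binW_nonneg hν m j) (le_max_right _ _))
    (Finset.sum_nonneg fun j _ => mul_nonneg (binW_nonneg hν m j) (le_max_right _ _))

lemma sum_binW_le_two (hν : ∀ z ∈ J, 0 ≤ ν z) (hν1 : ∑ z ∈ J, ν z = 1)
    (hp : ∀ z ∈ J, 0 ≤ p z) (m : ℕ) :
    ∑ j ∈ range (m+1), binW m J ν p j ≤ 2 := by
  unfold binW
  rw [Finset.sum_comm]
  calc ∑ z ∈ J, ∑ j ∈ range (m+1), ν z * tri m j (p z)
      = ∑ z ∈ J, ν z * ∑ j ∈ range (m+1), tri m j (p z) :=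
        Finset.sum_congr rfl fun z _ => by rw [Finset.mul_sum]
    _ ≤ ∑ z ∈ J, ν z * 2 :=
        Finset.sum_le_sum fun z hz =>
          mul_le_mul_of_nonneg_left (sum_tri_le_two m (hp z hz)) (hν z hz)
    _ = 2 := by rw [← Finset.sum_mul, hν1, one_mul]

lemma SCFDL_le_two (hν : ∀ z ∈ J, 0 ≤ ν z) (hν1 : ∑ z ∈ J, ν z = 1)
    (hp : ∀ z ∈ J, 0 ≤ p z) (hy : ∀ z ∈ J, y z = 0 ∨ y z = 1)
    {m i : ℕ} (hm : 1 ≤ m) (hi : i ≤ m) :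
    SCFDL m J ν p y i ≤ 2 := by
  have hm0 : (0:ℝ) < m := by exact_mod_cast hm
  have hub : ∀ j, binW m J ν p j * max (binQ m J ν p y j - ((i:ℝ)+1)/m) 0 ≤ binW m J ν p j := by
    intro j
    have h1 : max (binQ m J ν p y j - ((i:ℝ)+1)/m) 0 ≤ 1 := by
      apply max_le _ zero_le_one
      have := binQ_le_one (p := p) hν hy m j
      have ht : 0 ≤ ((i:ℝ)+1)/m := div_nonneg (by positivity) (Nat.cast_nonneg m)
      linarith
    calc binW m J ν p j * max (binQ m J ν p y j - ((i:ℝ)+1)/m) 0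
        ≤ binW m J ν p j * 1 := mul_le_mul_of_nonneg_left h1 (binW_nonneg hν m j)
      _ = binW m J ν p j := mul_one _
  have hlb : ∀ j, binW m J ν p j * max ((i:ℝ)/m - binQ m J ν p y j) 0 ≤ binW m J ν p j := by
    intro j
    have h1 : max ((i:ℝ)/m - binQ m J ν p y j) 0 ≤ 1 := by
      apply max_le _ zero_le_one
      have hq := binQ_nonneg (p := p) hν hy m j
      have hs : (i:ℝ)/m ≤ 1 := by
        rw [div_le_one hm0]
        exact_mod_cast hi
      linarith
    calc binW m J ν p j * max ((i:ℝ)/m - binQ m J ν p y j) 0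
        ≤ binW m J ν p j * 1 := mul_le_mul_of_nonneg_left h1 (binW_nonneg hν m j)
      _ = binW m J ν p j := mul_one _
  have hmerge : ∑ j ∈ range (i+1), binW m J ν p j + ∑ j ∈ Finset.Icc (i+1) m, binW m J ν p j
      = ∑ j ∈ range (m+1), binW m J ν p j := by
    rw [show Finset.Icc (i+1) m = Finset.Ico (i+1) (m+1) from by rw [Finset.Ico_add_one_right_eq_Icc],
      Finset.range_eq_Ico, Finset.range_eq_Ico]
    exact Finset.sum_Ico_consecutive _ (Nat.zero_le _) (by omega)
  have h1 : ∑ j ∈ range (i+1), binW m J ν p j * max (binQ m J ν p y j - ((i:ℝ)+1)/m) 0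
      ≤ ∑ j ∈ range (i+1), binW m J ν p j := Finset.sum_le_sum fun j _ => hub j
  have h2 : ∑ j ∈ Finset.Icc (i+1) m, binW m J ν p j * max ((i:ℝ)/m - binQ m J ν p y j) 0
      ≤ ∑ j ∈ Finset.Icc (i+1) m, binW m J ν p j := Finset.sum_le_sum fun j _ => hlb j
  have h3 := sum_binW_le_two hν hν1 hp m
  unfold SCFDL
  linarith

lemma SCDLm_le_two (hν : ∀ z ∈ J, 0 ≤ ν z) (hν1 : ∑ z ∈ J, ν z = 1)
    (hp : ∀ z ∈ J, 0 ≤ p z) (hy : ∀ z ∈ J, y z = 0 ∨ y z = 1) {m : ℕ} (hm : 1 ≤ m) :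
    SCDLm m J ν p y ≤ 2 :=
  Finset.sup'_le _ _ fun i hi =>
    SCFDL_le_two hν hν1 hp hy hm (by have := Finset.mem_range.mp hi; omega)

lemma SCDLm_le_add (hν : ∀ z ∈ J, 0 ≤ ν z)
    (hp₁ : ∀ z ∈ J, 0 ≤ p₁ z) (hp₂ : ∀ z ∈ J, 0 ≤ p₂ z)
    (hy : ∀ z ∈ J, y z = 0 ∨ y z = 1) {m : ℕ} (hm : 1 ≤ m) :
    SCDLm m J ν p₁ y ≤ SCDLm m J ν p₂ y + 12 * m * ∑ z ∈ J, ν z * |p₁ z - p₂ z| := by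
  apply Finset.sup'_le
  intro i hi
  have hi' : i ≤ m := by have := Finset.mem_range.mp hi; omega
  refine le_trans (SCFDL_le_SCFDL_add hν hp₁ hp₂ hy hm hi') ?_
  have := Finset.le_sup' (SCFDL m J ν p₂ y) hi
  unfold SCDLm
  linarith

end bounds

lemma max_split2 (x z : ℝ) : max (x + 2⁻¹*z) 0 ≤ max x 0 + 2⁻¹ * max z 0 := by
  apply max_le
  · have h1 : x ≤ max x 0 := le_max_left _ _
    have h3 : z ≤ max z 0 := le_max_left _ _
    nlinarith
  · have h1 : (0:ℝ) ≤ max x 0 := le_max_right _ _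
    have h3 : (0:ℝ) ≤ max z 0 := le_max_right _ _
    nlinarith

lemma max_split3 (x w z : ℝ) :
    max (2⁻¹*x + w + 2⁻¹*z) 0 ≤ 2⁻¹ * max x 0 + max w 0 + 2⁻¹ * max z 0 := by
  apply max_le
  · have h1 : x ≤ max x 0 := le_max_left _ _
    have h2 : w ≤ max w 0 := le_max_left _ _
    have h3 : z ≤ max z 0 := le_max_left _ _
    nlinarith
  · have h1 : (0:ℝ) ≤ max x 0 := le_max_right _ _
    have h2 : (0:ℝ) ≤ max w 0 := le_max_right _ _
    have h3 : (0:ℝ) ≤ max z 0 := le_max_right _ _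
    nlinarith

lemma triple_sum (g : ℕ → ℝ) :
    ∀ n, 1 ≤ n → ∑ r ∈ range n, (2⁻¹*g (2*r+1) + g (2*r+2) + 2⁻¹*g (2*r+3))
      = 2⁻¹ * g 1 + (∑ r ∈ range (2*n-1), g (r+2)) + 2⁻¹ * g (2*n+1) := by
  intro n hn
  induction n, hn using Nat.le_induction with
  | base =>
      rw [Finset.sum_range_one]
      norm_num [Finset.sum_range_one]
  | succ n hn ih =>
      rw [Finset.sum_range_succ, ih]
      have e : 2*(n+1)-1 = (2*n-1)+1+1 := by omega
      rw [e, Finset.sum_range_succ, Finset.sum_range_succ]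
      have e1 : (2*n-1)+2 = 2*n+1 := by omega
      have e2 : (2*n-1)+1+2 = 2*n+2 := by omega
      have e3 : 2*(n+1)+1 = 2*n+3 := by omega
      rw [e1, e2, e3]
      ring

section halving

variable {α : Type} {J : Finset α} {ν p y : α → ℝ}

lemma binW_halving_succ (m j : ℕ) :
    binW m J ν p (j+1) = 2⁻¹ * binW (2*m) J ν p (2*j+1) + binW (2*m) J ν p (2*j+2)
      + 2⁻¹ * binW (2*m) J ν p (2*j+3) := by
  unfold binW
  have h : ∀ z ∈ J, ν z * tri m (j+1) (p z)
      = 2⁻¹*(ν z * tri (2*m) (2*j+1) (p z)) + ν z * tri (2*m) (2*j+2) (p z)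
        + 2⁻¹*(ν z * tri (2*m) (2*j+3) (p z)) := fun z _ => by
    rw [tri_halving_succ]; ring
  rw [Finset.sum_congr rfl h, Finset.sum_add_distrib, Finset.sum_add_distrib,
    ← Finset.mul_sum, ← Finset.mul_sum]

lemma binA_halving_succ (m j : ℕ) :
    binA m J ν p y (j+1) = 2⁻¹ * binA (2*m) J ν p y (2*j+1) + binA (2*m) J ν p y (2*j+2)
      + 2⁻¹ * binA (2*m) J ν p y (2*j+3) := by
  unfold binA
  have h : ∀ z ∈ J, ν z * tri m (j+1) (p z) * y z
      = 2⁻¹*(ν z * tri (2*m) (2*j+1) (p z) * y z) + ν z * tri (2*m) (2*j+2) (p z) * y z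
        + 2⁻¹*(ν z * tri (2*m) (2*j+3) (p z) * y z) := fun z _ => by
    rw [tri_halving_succ]; ring
  rw [Finset.sum_congr rfl h, Finset.sum_add_distrib, Finset.sum_add_distrib,
    ← Finset.mul_sum, ← Finset.mul_sum]

lemma binW_halving_zero (m : ℕ) (hp : ∀ z ∈ J, 0 ≤ p z) :
    binW m J ν p 0 = binW (2*m) J ν p 0 + 2⁻¹ * binW (2*m) J ν p 1 := by
  unfold binW
  have h : ∀ z ∈ J, ν z * tri m 0 (p z)
      = ν z * tri (2*m) 0 (p z) + 2⁻¹*(ν z * tri (2*m) 1 (p z)) := fun z hz => by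
    rw [tri_halving_zero m (hp z hz)]; ring
  rw [Finset.sum_congr rfl h, Finset.sum_add_distrib, ← Finset.mul_sum]

lemma binA_halving_zero (m : ℕ) (hp : ∀ z ∈ J, 0 ≤ p z) :
    binA m J ν p y 0 = binA (2*m) J ν p y 0 + 2⁻¹ * binA (2*m) J ν p y 1 := by
  unfold binA
  have h : ∀ z ∈ J, ν z * tri m 0 (p z) * y z
      = ν z * tri (2*m) 0 (p z) * y z + 2⁻¹*(ν z * tri (2*m) 1 (p z) * y z) := fun z hz => by
    rw [tri_halving_zero m (hp z hz)]; ring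
  rw [Finset.sum_congr rfl h, Finset.sum_add_distrib, ← Finset.mul_sum]

lemma binW_vanish {m' j : ℕ} (hp : ∀ z ∈ J, p z ≤ 1) (hj : m' + 1 ≤ j) :
    binW m' J ν p j = 0 :=
  Finset.sum_eq_zero fun z hz => by rw [tri_vanish (hp z hz) hj, mul_zero]

lemma binA_vanish {m' j : ℕ} (hp : ∀ z ∈ J, p z ≤ 1) (hj : m' + 1 ≤ j) :
    binA m' J ν p y j = 0 :=
  Finset.sum_eq_zero fun z hz => by rw [tri_vanish (hp z hz) hj, mul_zero, zero_mul]

end halving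

section core

variable {α : Type} {J : Finset α} {ν p y : α → ℝ}

set_option maxHeartbeats 2000000 in
lemma SCFDL_le_SCDLm_double (hν : ∀ z ∈ J, 0 ≤ ν z)
    (hp : ∀ z ∈ J, p z ∈ Set.Icc (0:ℝ) 1) (hy : ∀ z ∈ J, y z = 0 ∨ y z = 1)
    {m i : ℕ} (hm : 1 ≤ m) (hi : i ≤ m) :
    SCFDL m J ν p y i ≤ SCDLm (2*m) J ν p y := by
  have hp0 : ∀ z ∈ J, 0 ≤ p z := fun z hz => (hp z hz).1
  have hp1 : ∀ z ∈ J, p z ≤ 1 := fun z hz => (hp z hz).2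
  have hm0 : (0:ℝ) < m := by exact_mod_cast hm
  have hm2 : (0:ℝ) < 2*m := by linarith
  set W' : ℕ → ℝ := binW (2*m) J ν p with hW'
  set A' : ℕ → ℝ := binA (2*m) J ν p y with hA'
  set T : ℝ := ((i:ℝ)+1)/m with hT
  set S : ℝ := (i:ℝ)/m with hS
  set u : ℕ → ℝ := fun j => max (A' j - T * W' j) 0 with hu
  set l : ℕ → ℝ := fun j => max (S * W' j - A' j) 0 with hl
  have hWnn : ∀ j, 0 ≤ W' j := fun j => binW_nonneg hν (2*m) j
  have hT0 : 0 ≤ T := div_nonneg (by positivity) (Nat.cast_nonneg m)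
  have hS0 : 0 ≤ S := div_nonneg (Nat.cast_nonneg i) (Nat.cast_nonneg m)
  have hST : S ≤ T := by
    rw [hS, hT, div_le_div_iff₀ hm0 hm0]
    have : (0:ℝ) ≤ m := le_of_lt hm0
    nlinarith
  -- threshold casts for fine indices
  have hTcast : T = (2*(i:ℝ)+1+1)/((2:ℝ)*m) := by
    rw [hT, show (2*(i:ℝ)+1+1) = 2*((i:ℝ)+1) by ring, mul_div_mul_left _ _ (two_ne_zero)]
  have hScast : S = (2*(i:ℝ))/((2:ℝ)*m) := by
    rw [hS, mul_div_mul_left _ _ (two_ne_zero)]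
  -- vanishing at 2m+1
  have hWtop : W' (2*m+1) = 0 := binW_vanish hp1 (by omega)
  have hAtop : A' (2*m+1) = 0 := binA_vanish hp1 (by omega)
  have hutop : u (2*m+1) = 0 := by
    rw [hu]
    simp only [hWtop, hAtop]
    norm_num
  have hltop : l (2*m+1) = 0 := by
    rw [hl]
    simp only [hWtop, hAtop]
    norm_num
  -- upper sum bound
  have hFU : ∑ j ∈ range (i+1), max (binA m J ν p y j - T * binW m J ν p j) 0
      ≤ ∑ r ∈ range (2*i+1), u r + 2⁻¹ * u (2*i+1) := by
    have hF0 : max (binA m J ν p y 0 - T * binW m J ν p 0) 0 ≤ u 0 + 2⁻¹ * u 1 := by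
      have e : binA m J ν p y 0 - T * binW m J ν p 0
          = (A' 0 - T * W' 0) + 2⁻¹ * (A' 1 - T * W' 1) := by
        rw [binA_halving_zero m hp0, binW_halving_zero m hp0, hA', hW']
        ring
      rw [e]
      exact max_split2 _ _
    have hFsucc : ∀ r, max (binA m J ν p y (r+1) - T * binW m J ν p (r+1)) 0
        ≤ 2⁻¹ * u (2*r+1) + u (2*r+2) + 2⁻¹ * u (2*r+3) := by
      intro r
      have e : binA m J ν p y (r+1) - T * binW m J ν p (r+1)
          = 2⁻¹*(A' (2*r+1) - T * W' (2*r+1)) + (A' (2*r+2) - T * W' (2*r+2))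
            + 2⁻¹*(A' (2*r+3) - T * W' (2*r+3)) := by
        rw [binA_halving_succ m r, binW_halving_succ m r, hA', hW']
        ring
      rw [e]
      exact max_split3 _ _ _
    rw [Finset.sum_range_succ']
    rcases Nat.eq_zero_or_pos i with hi0 | hipos
    · subst hi0
      simpa using hF0
    · have step : ∑ r ∈ range i, max (binA m J ν p y (r+1) - T * binW m J ν p (r+1)) 0
          ≤ ∑ r ∈ range i, (2⁻¹ * u (2*r+1) + u (2*r+2) + 2⁻¹ * u (2*r+3)) :=
        Finset.sum_le_sum fun r _ => hFsucc r
      have hts := triple_sum u i hipos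
      have hsplit : ∑ r ∈ range (2*i+1), u r
          = u 0 + u 1 + ∑ r ∈ range (2*i-1), u (r+2) := by
        rw [show 2*i+1 = (2*i-1)+1+1 by omega, Finset.sum_range_succ', Finset.sum_range_succ']
        have e : ∀ x ∈ range (2*i-1), u (x+1+1) = u (x+2) := fun x _ => by norm_num
        rw [Finset.sum_congr rfl e]
        simp only [Nat.zero_add]
        ring
      calc ∑ r ∈ range i, max (binA m J ν p y (r+1) - T * binW m J ν p (r+1)) 0
            + max (binA m J ν p y 0 - T * binW m J ν p 0) 0
          ≤ (2⁻¹ * u 1 + (∑ r ∈ range (2*i-1), u (r+2)) + 2⁻¹ * u (2*i+1))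
            + (u 0 + 2⁻¹ * u 1) := by
            rw [← hts]
            exact add_le_add step hF0
        _ = ∑ r ∈ range (2*i+1), u r + 2⁻¹ * u (2*i+1) := by rw [hsplit]; ring
  -- main case split
  by_cases him : i = m
  · -- i = m : lower sum empty
    subst him
    have hemp : Finset.Icc (i+1) i = (∅ : Finset ℕ) := Finset.Icc_eq_empty (by omega)
    have hrw := SCFDL_eq (p := p) (y := y) hν i i
    rw [hemp, Finset.sum_empty, add_zero] at hrw
    rw [hrw]
    have hX : SCFDL (2*i) J ν p y (2*i)
        = ∑ j ∈ range (2*i+1), max (A' j - (((2*i:ℕ):ℝ)+1)/((2*i:ℕ):ℝ) * W' j) 0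
          + ∑ j ∈ Finset.Icc (2*i+1) (2*i),
              max (((2*i:ℕ):ℝ)/((2*i:ℕ):ℝ) * W' j - A' j) 0 := SCFDL_eq hν (2*i) (2*i)
    rw [Finset.Icc_eq_empty (by omega), Finset.sum_empty, add_zero] at hX
    have hmono : ∀ j, u j ≤ max (A' j - (((2*i:ℕ):ℝ)+1)/((2*i:ℕ):ℝ) * W' j) 0 := by
      intro j
      rw [hu]
      apply max_le_max _ (le_refl 0)
      have hTT : (((2*i:ℕ):ℝ)+1)/((2*i:ℕ):ℝ) ≤ T := by
        rw [hTcast]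
        push_cast
        rw [div_le_div_iff₀ hm2 hm2]
        have : (0:ℝ) ≤ 2*(i:ℝ) := le_of_lt hm2
        nlinarith
      have := mul_le_mul_of_nonneg_right hTT (hWnn j)
      linarith
    calc ∑ j ∈ range (i+1), max (binA i J ν p y j - T * binW i J ν p j) 0
        ≤ ∑ r ∈ range (2*i+1), u r + 2⁻¹ * u (2*i+1) := hFU
      _ = ∑ r ∈ range (2*i+1), u r := by rw [hutop]; ring
      _ ≤ ∑ j ∈ range (2*i+1), max (A' j - (((2*i:ℕ):ℝ)+1)/((2*i:ℕ):ℝ) * W' j) 0 :=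
          Finset.sum_le_sum fun j _ => hmono j
      _ = SCFDL (2*i) J ν p y (2*i) := hX.symm
      _ ≤ SCDLm (2*i) J ν p y :=
          Finset.le_sup' _ (Finset.mem_range.mpr (by omega))
  · -- i < m
    have hilt : i < m := lt_of_le_of_ne hi him
    -- lower sum bound
    have hFL : ∑ j ∈ Finset.Icc (i+1) m, max (S * binW m J ν p j - binA m J ν p y j) 0
        ≤ 2⁻¹ * l (2*i+1) + ∑ j ∈ Finset.Icc (2*i+2) (2*m), l j + 2⁻¹ * l (2*m+1) := by
      have hGsucc : ∀ r, max (S * binW m J ν p (i+1+r) - binA m J ν p y (i+1+r)) 0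
          ≤ 2⁻¹ * l (2*(i+r)+1) + l (2*(i+r)+2) + 2⁻¹ * l (2*(i+r)+3) := by
        intro r
        rw [show i+1+r = (i+r)+1 by omega]
        have e : S * binW m J ν p ((i+r)+1) - binA m J ν p y ((i+r)+1)
            = 2⁻¹*(S * W' (2*(i+r)+1) - A' (2*(i+r)+1))
              + (S * W' (2*(i+r)+2) - A' (2*(i+r)+2))
              + 2⁻¹*(S * W' (2*(i+r)+3) - A' (2*(i+r)+3)) := by
          rw [binA_halving_succ m (i+r), binW_halving_succ m (i+r), hA', hW']
          ring
        rw [e]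
        exact max_split3 _ _ _
      have hconv : ∑ j ∈ Finset.Icc (i+1) m, max (S * binW m J ν p j - binA m J ν p y j) 0
          = ∑ r ∈ range (m-i), max (S * binW m J ν p (i+1+r) - binA m J ν p y (i+1+r)) 0 := by
        rw [show Finset.Icc (i+1) m = Finset.Ico (i+1) (m+1) from by rw [Finset.Ico_add_one_right_eq_Icc],
          Finset.sum_Ico_eq_sum_range, show m+1-(i+1) = m-i from by omega]
      have hconv2 : ∑ j ∈ Finset.Icc (2*i+2) (2*m), l j
          = ∑ r ∈ range (2*(m-i)-1), l (2*i+2+r) := by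
        rw [show Finset.Icc (2*i+2) (2*m) = Finset.Ico (2*i+2) (2*m+1) from by
            rw [Finset.Ico_add_one_right_eq_Icc], Finset.sum_Ico_eq_sum_range,
          show 2*m+1-(2*i+2) = 2*(m-i)-1 from by omega]
      have hh : ∀ k, l (2*i+k) = l (2*i+k) := fun _ => rfl
      have hts := triple_sum (fun k => l (2*i+k)) (m-i) (by omega)
      have hrw1 : ∀ r, (2⁻¹ * l (2*i+(2*r+1)) + l (2*i+(2*r+2)) + 2⁻¹ * l (2*i+(2*r+3)))
          = 2⁻¹ * l (2*(i+r)+1) + l (2*(i+r)+2) + 2⁻¹ * l (2*(i+r)+3) := by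
        intro r
        rw [show 2*i+(2*r+1) = 2*(i+r)+1 by omega, show 2*i+(2*r+2) = 2*(i+r)+2 by omega,
          show 2*i+(2*r+3) = 2*(i+r)+3 by omega]
      have hrw2 : ∀ r, l (2*i+(r+2)) = l (2*i+2+r) := by
        intro r
        rw [show 2*i+(r+2) = 2*i+2+r by omega]
      have e1 : l (2*i+1) = l (2*i+1) := rfl
      have e2 : l (2*i+(2*(m-i)+1)) = l (2*m+1) := by
        rw [show 2*i+(2*(m-i)+1) = 2*m+1 by omega]
      have e3 : ∑ r ∈ range (2*(m-i)-1), l (2*i+(r+2)) = ∑ j ∈ Finset.Icc (2*i+2) (2*m), l j := by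
        rw [hconv2]
        exact Finset.sum_congr rfl fun r _ => hrw2 r
      calc ∑ j ∈ Finset.Icc (i+1) m, max (S * binW m J ν p j - binA m J ν p y j) 0
          = ∑ r ∈ range (m-i), max (S * binW m J ν p (i+1+r) - binA m J ν p y (i+1+r)) 0 := hconv
        _ ≤ ∑ r ∈ range (m-i), (2⁻¹ * l (2*(i+r)+1) + l (2*(i+r)+2) + 2⁻¹ * l (2*(i+r)+3)) :=
            Finset.sum_le_sum fun r _ => hGsucc r
        _ = ∑ r ∈ range (m-i), (2⁻¹ * l (2*i+(2*r+1)) + l (2*i+(2*r+2)) + 2⁻¹ * l (2*i+(2*r+3))) :=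
            Finset.sum_congr rfl fun r _ => (hrw1 r).symm
        _ = 2⁻¹ * l (2*i+1) + (∑ r ∈ range (2*(m-i)-1), l (2*i+(r+2)))
            + 2⁻¹ * l (2*i+(2*(m-i)+1)) := hts
        _ = 2⁻¹ * l (2*i+1) + ∑ j ∈ Finset.Icc (2*i+2) (2*m), l j + 2⁻¹ * l (2*m+1) := by
            rw [e2, e3]
    -- rewrite SCFDL m i
    have hrw := SCFDL_eq (p := p) (y := y) hν m i
    rw [hrw]
    have hmainle : ∑ j ∈ range (i+1), max (binA m J ν p y j - T * binW m J ν p j) 0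
        + ∑ j ∈ Finset.Icc (i+1) m, max (S * binW m J ν p j - binA m J ν p y j) 0
        ≤ ∑ r ∈ range (2*i+1), u r + 2⁻¹ * u (2*i+1)
          + (2⁻¹ * l (2*i+1) + ∑ j ∈ Finset.Icc (2*i+2) (2*m), l j) := by
      have := add_le_add hFU hFL
      rw [hltop] at this
      linarith
    refine le_trans hmainle ?_
    -- case split on sign at bin 2i+1
    rcases le_or_gt (A' (2*i+1)) (T * W' (2*i+1)) with hc | hc
    · -- compare with SCFDL (2m) (2i)
      have hu0 : u (2*i+1) = 0 := by
        rw [hu]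
        exact max_eq_right (by linarith)
      have hX : SCFDL (2*m) J ν p y (2*i)
          = ∑ j ∈ range (2*i+1), max (A' j - (((2*i:ℕ):ℝ)+1)/((2*m:ℕ):ℝ) * W' j) 0
            + ∑ j ∈ Finset.Icc (2*i+1) (2*m),
                max (((2*i:ℕ):ℝ)/((2*m:ℕ):ℝ) * W' j - A' j) 0 := SCFDL_eq hν (2*m) (2*i)
      have hSeq : (((2*i:ℕ):ℝ))/((2*m:ℕ):ℝ) = S := by
        rw [hScast]
        push_cast
        ring_nf
      have hmono : ∀ j, u j ≤ max (A' j - (((2*i:ℕ):ℝ)+1)/((2*m:ℕ):ℝ) * W' j) 0 := by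
        intro j
        rw [hu]
        apply max_le_max _ (le_refl 0)
        have hTT : (((2*i:ℕ):ℝ)+1)/((2*m:ℕ):ℝ) ≤ T := by
          rw [hTcast]
          push_cast
          rw [div_le_div_iff₀ hm2 hm2]
          have : (0:ℝ) ≤ 2*(m:ℝ) := le_of_lt hm2
          nlinarith
        have := mul_le_mul_of_nonneg_right hTT (hWnn j)
        linarith
      have hlsplit : ∑ j ∈ Finset.Icc (2*i+1) (2*m), l j
          = l (2*i+1) + ∑ j ∈ Finset.Icc (2*i+2) (2*m), l j := by
        have hins : insert (2*i+1) (Finset.Icc (2*i+2) (2*m)) = Finset.Icc (2*i+1) (2*m) := by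
          rw [show 2*i+2 = (2*i+1)+1 from rfl, Finset.Icc_add_one_left_eq_Ioc]
          exact Finset.Ioc_insert_left (by omega)
        rw [← hins, Finset.sum_insert (by simp)]
      calc ∑ r ∈ range (2*i+1), u r + 2⁻¹ * u (2*i+1)
            + (2⁻¹ * l (2*i+1) + ∑ j ∈ Finset.Icc (2*i+2) (2*m), l j)
          ≤ ∑ j ∈ range (2*i+1), max (A' j - (((2*i:ℕ):ℝ)+1)/((2*m:ℕ):ℝ) * W' j) 0
            + (l (2*i+1) + ∑ j ∈ Finset.Icc (2*i+2) (2*m), l j) := by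
            have h1 := Finset.sum_le_sum fun j (_ : j ∈ range (2*i+1)) => hmono j
            have h2 : 0 ≤ l (2*i+1) := le_max_right _ _
            rw [hu0]
            linarith
        _ = SCFDL (2*m) J ν p y (2*i) := by
            rw [hX]
            have hlow : ∀ j ∈ Finset.Icc (2*i+1) (2*m),
                max ((((2*i:ℕ):ℝ))/((2*m:ℕ):ℝ) * W' j - A' j) 0 = l j := fun j _ => by
              rw [hSeq]
            rw [Finset.sum_congr rfl hlow, hlsplit]
        _ ≤ SCDLm (2*m) J ν p y :=
            Finset.le_sup' _ (Finset.mem_range.mpr (by omega))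
    · -- compare with SCFDL (2m) (2i+1)
      have hl0 : l (2*i+1) = 0 := by
        rw [hl]
        apply max_eq_right
        have := mul_le_mul_of_nonneg_right hST (hWnn (2*i+1))
        linarith
      have hile : 2*i+1 ≤ 2*m := by omega
      have hY : SCFDL (2*m) J ν p y (2*i+1)
          = ∑ j ∈ range (2*i+1+1), max (A' j - (((2*i+1:ℕ):ℝ)+1)/((2*m:ℕ):ℝ) * W' j) 0
            + ∑ j ∈ Finset.Icc (2*i+2) (2*m),
                max (((2*i+1:ℕ):ℝ)/((2*m:ℕ):ℝ) * W' j - A' j) 0 := SCFDL_eq hν (2*m) (2*i+1)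
      have hTeq : (((2*i+1:ℕ):ℝ)+1)/((2*m:ℕ):ℝ) = T := by
        rw [hTcast]
        push_cast
        ring_nf
      have hlmono : ∀ j, l j ≤ max ((((2*i+1:ℕ):ℝ))/((2*m:ℕ):ℝ) * W' j - A' j) 0 := by
        intro j
        rw [hl]
        apply max_le_max _ (le_refl 0)
        have hSS : S ≤ (((2*i+1:ℕ):ℝ))/((2*m:ℕ):ℝ) := by
          rw [hScast]
          push_cast
          rw [div_le_div_iff₀ hm2 hm2]
          have : (0:ℝ) ≤ 2*(m:ℝ) := le_of_lt hm2
          nlinarith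
        have := mul_le_mul_of_nonneg_right hSS (hWnn j)
        linarith
      calc ∑ r ∈ range (2*i+1), u r + 2⁻¹ * u (2*i+1)
            + (2⁻¹ * l (2*i+1) + ∑ j ∈ Finset.Icc (2*i+2) (2*m), l j)
          ≤ ∑ r ∈ range (2*i+1), u r + u (2*i+1)
            + ∑ j ∈ Finset.Icc (2*i+2) (2*m),
                max ((((2*i+1:ℕ):ℝ))/((2*m:ℕ):ℝ) * W' j - A' j) 0 := by
            have h1 := Finset.sum_le_sum fun j (_ : j ∈ Finset.Icc (2*i+2) (2*m)) => hlmono j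
            have h2 : 0 ≤ u (2*i+1) := le_max_right _ _
            rw [hl0]
            linarith
        _ = SCFDL (2*m) J ν p y (2*i+1) := by
            rw [hY, ← Finset.sum_range_succ]
            have hupp : ∀ j ∈ range (2*i+1+1),
                max (A' j - (((2*i+1:ℕ):ℝ)+1)/((2*m:ℕ):ℝ) * W' j) 0 = u j := fun j _ => by
              rw [hTeq]
            have hlow : ∀ j ∈ Finset.Icc (2*i+1+1) (2*m),
                max ((((2*i+1:ℕ):ℝ))/((2*m:ℕ):ℝ) * W' j - A' j) 0
                  = max ((((2*i+1:ℕ):ℝ))/((2*m:ℕ):ℝ) * W' j - A' j) 0 := fun j _ => rfl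
            rw [Finset.sum_congr rfl hupp]
        _ ≤ SCDLm (2*m) J ν p y :=
            Finset.le_sup' _ (Finset.mem_range.mpr (by omega))

lemma SCDLm_double (hν : ∀ z ∈ J, 0 ≤ ν z)
    (hp : ∀ z ∈ J, p z ∈ Set.Icc (0:ℝ) 1) (hy : ∀ z ∈ J, y z = 0 ∨ y z = 1)
    {m : ℕ} (hm : 1 ≤ m) :
    SCDLm m J ν p y ≤ SCDLm (2*m) J ν p y :=
  Finset.sup'_le _ _ fun i hi =>
    SCFDL_le_SCDLm_double hν hp hy hm (by have := Finset.mem_range.mp hi; omega)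

end core

section scdl

variable {α : Type} {J : Finset α} {ν p p₁ p₂ y : α → ℝ}

lemma F_bdd : BddBelow (Set.range fun k : ℕ =>
    max (SCDLm (2^(k+1)) J ν p y) ((1:ℝ)/2^(k+1))) := by
  refine ⟨0, ?_⟩
  rintro x ⟨k, rfl⟩
  exact le_trans (by positivity) (le_max_right _ _)

lemma SCDL_nonneg : 0 ≤ SCDL J ν p y :=
  le_ciInf fun k => le_trans (by positivity) (le_max_right _ _)

lemma SCDL_le_two (hν : ∀ z ∈ J, 0 ≤ ν z) (hν1 : ∑ z ∈ J, ν z = 1)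
    (hp0 : ∀ z ∈ J, 0 ≤ p z) (hy : ∀ z ∈ J, y z = 0 ∨ y z = 1) :
    SCDL J ν p y ≤ 2 := by
  refine le_trans (ciInf_le F_bdd 0) ?_
  apply max_le
  · exact SCDLm_le_two hν hν1 hp0 hy (by norm_num)
  · norm_num

lemma SCDLm_pow_mono (hν : ∀ z ∈ J, 0 ≤ ν z)
    (hp : ∀ z ∈ J, p z ∈ Set.Icc (0:ℝ) 1) (hy : ∀ z ∈ J, y z = 0 ∨ y z = 1)
    {k k' : ℕ} (hkk : k ≤ k') :
    SCDLm (2^(k+1)) J ν p y ≤ SCDLm (2^(k'+1)) J ν p y := by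
  induction k', hkk using Nat.le_induction with
  | base => exact le_refl _
  | succ n hn ih =>
      refine le_trans ih ?_
      have h := SCDLm_double hν hp hy (m := 2^(n+1)) Nat.one_le_two_pow
      rw [show 2*2^(n+1) = 2^(n+1+1) from by rw [pow_succ]; ring] at h
      exact h

lemma SCDL_le_aux (hν : ∀ z ∈ J, 0 ≤ ν z)
    (hp₁ : ∀ z ∈ J, p₁ z ∈ Set.Icc (0:ℝ) 1) (hp₂ : ∀ z ∈ J, p₂ z ∈ Set.Icc (0:ℝ) 1)
    (hy : ∀ z ∈ J, y z = 0 ∨ y z = 1)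
    {b : ℝ} (hb : SCDL J ν p₂ y < b) :
    SCDL J ν p₁ y ≤ b + 24 * (∑ z ∈ J, ν z * |p₁ z - p₂ z|) / min b 1 := by
  set ε := ∑ z ∈ J, ν z * |p₁ z - p₂ z| with hεdef
  have hε0 : 0 ≤ ε := Finset.sum_nonneg fun z hz => mul_nonneg (hν z hz) (abs_nonneg _)
  have hb0 : 0 < b := lt_of_le_of_lt SCDL_nonneg hb
  have hmin0 : 0 < min b 1 := lt_min hb0 one_pos
  obtain ⟨k1, hk1⟩ := exists_lt_of_ciInf_lt hb
  have hPk1 : (1:ℝ)/2^(k1+1) < b := lt_of_le_of_lt (le_max_right _ _) hk1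
  have hex : ∃ k : ℕ, (1:ℝ)/2^(k+1) < b := ⟨k1, hPk1⟩
  set k := Nat.find hex with hkdef
  have hk : (1:ℝ)/2^(k+1) < b := Nat.find_spec hex
  have hkk1 : k ≤ k1 := Nat.find_min' hex hPk1
  have hmle : ((2^(k+1) : ℕ) : ℝ) ≤ 2 / min b 1 := by
    push_cast
    rcases Nat.eq_zero_or_pos k with hk0 | hk0
    · rw [hk0]
      rw [le_div_iff₀ hmin0]
      have h1 := min_le_right b 1
      norm_num
    · have hnot := Nat.find_min hex (show k-1 < k by omega)
      push_neg at hnot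
      rw [show k-1+1 = k by omega] at hnot
      have h2k : (2:ℝ)^k * b ≤ 1 := by
        have := (le_div_iff₀ (by positivity : (0:ℝ) < 2^k)).mp hnot
        linarith [this]
      have hstep : (2:ℝ)^(k+1) ≤ 2/b := by
        rw [pow_succ, le_div_iff₀ hb0]
        nlinarith
      refine le_trans hstep ?_
      exact div_le_div_of_nonneg_left (by norm_num) hmin0 (min_le_left b 1)
  have hm1 : 1 ≤ 2^(k+1) := Nat.one_le_two_pow
  have lip := SCDLm_le_add (p₁ := p₁) (p₂ := p₂) hν
    (fun z hz => (hp₁ z hz).1) (fun z hz => (hp₂ z hz).1) hy hm1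
  have mono := SCDLm_pow_mono (p := p₂) hν hp₂ hy hkk1
  have hSk1 : SCDLm (2^(k1+1)) J ν p₂ y < b := lt_of_le_of_lt (le_max_left _ _) hk1
  have h24 : 12 * ((2^(k+1):ℕ):ℝ) * ε ≤ 24 * ε / min b 1 := by
    have h1 : 12 * ((2^(k+1):ℕ):ℝ) * ε ≤ 12 * (2/min b 1) * ε :=
      mul_le_mul_of_nonneg_right (by nlinarith [hmle]) hε0
    have h2 : 12 * (2/min b 1) * ε = 24 * ε / min b 1 := by ring
    linarith
  have hq0 : 0 ≤ 24 * ε / min b 1 := by positivity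
  calc SCDL J ν p₁ y ≤ max (SCDLm (2^(k+1)) J ν p₁ y) ((1:ℝ)/2^(k+1)) := ciInf_le F_bdd k
    _ ≤ b + 24 * ε / min b 1 := by
        apply max_le
        · linarith [lip, mono, hSk1]
        · linarith [hk, hq0]

lemma SCDL_sq_le (hν : ∀ z ∈ J, 0 ≤ ν z) (hν1 : ∑ z ∈ J, ν z = 1)
    (hp₁ : ∀ z ∈ J, p₁ z ∈ Set.Icc (0:ℝ) 1) (hp₂ : ∀ z ∈ J, p₂ z ∈ Set.Icc (0:ℝ) 1)
    (hy : ∀ z ∈ J, y z = 0 ∨ y z = 1) :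
    SCDL J ν p₁ y ^ 2 ≤ SCDL J ν p₂ y ^ 2 + 700 * ∑ z ∈ J, ν z * |p₁ z - p₂ z| := by
  set ε := ∑ z ∈ J, ν z * |p₁ z - p₂ z| with hεdef
  set a := SCDL J ν p₂ y with hadef
  set A1 := SCDL J ν p₁ y with hA1def
  have hε0 : 0 ≤ ε := Finset.sum_nonneg fun z hz => mul_nonneg (hν z hz) (abs_nonneg _)
  have hε1 : ε ≤ 1 := by
    rw [hεdef, ← hν1]
    apply Finset.sum_le_sum
    intro z hz
    have h1 := (hp₁ z hz).1
    have h2 := (hp₁ z hz).2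
    have h3 := (hp₂ z hz).1
    have h4 := (hp₂ z hz).2
    have : |p₁ z - p₂ z| ≤ 1 := abs_le.mpr ⟨by linarith, by linarith⟩
    nlinarith [hν z hz]
  have ha0 : 0 ≤ a := SCDL_nonneg
  have hA0 : 0 ≤ A1 := SCDL_nonneg
  have hA2 : A1 ≤ 2 := SCDL_le_two hν hν1 (fun z hz => (hp₁ z hz).1) hy
  have ha2 : a ≤ 2 := SCDL_le_two hν hν1 (fun z hz => (hp₂ z hz).1) hy
  have MAIN : ∀ b : ℝ, a < b → A1 ≤ b + 24 * ε / min b 1 := fun b hb =>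
    SCDL_le_aux hν hp₁ hp₂ hy hb
  clear_value ε a A1
  have H : ∀ δ : ℝ, 0 < δ → δ ≤ 1 → A1^2 ≤ a^2 + 700*ε + 30*δ := by
    intro δ hδ0 hδ1
    rcases le_or_gt 1 a with ha1 | ha1
    · have hb := MAIN (a + δ) (by linarith)
      have hmin : min (a+δ) 1 = 1 := min_eq_right (by linarith)
      rw [hmin, div_one] at hb
      nlinarith [hε0, hε1, hδ0, hδ1, ha2, hA0, hb]
    · rcases le_or_gt (24*ε) ((min (a+δ) 1)^2) with hce | hce
      · set b := min (a+δ) 1 with hbdef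
        have hab : a < b := lt_min (by linarith) ha1
        have hb1 : b ≤ 1 := min_le_right _ _
        have hbpos : 0 < b := lt_of_le_of_lt ha0 hab
        have hmain := MAIN b hab
        rw [min_eq_left hb1] at hmain
        have h24b : 24*ε/b ≤ b := by
          rw [div_le_iff₀ hbpos]
          nlinarith
        have hqb : b * (24*ε/b) = 24*ε := by field_simp
        have hq0 : 0 ≤ 24*ε/b := by positivity
        have hbb : b ≤ a + δ := min_le_left _ _
        nlinarith [hmain, h24b, hqb, hq0, hbb, hδ0, hδ1, ha0, hA0, ha1]
      · rcases le_or_gt (24*ε) 1 with h24le | h24gt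
        · set G := Real.sqrt (24*ε) with hGdef
          have hG2 : G^2 = 24*ε := Real.sq_sqrt (by positivity)
          have hGnn : 0 ≤ G := Real.sqrt_nonneg _
          have hb0a : a < min (a+δ) 1 := lt_min (by linarith) ha1
          have hmnn : 0 ≤ min (a+δ) 1 := le_trans ha0 (le_of_lt hb0a)
          have hbG : min (a+δ) 1 < G := by nlinarith
          have haG : a < G := lt_trans hb0a hbG
          have hG1 : G ≤ 1 := by nlinarith
          have hG0 : 0 < G := lt_of_le_of_lt ha0 haG
          have hmain := MAIN G haG
          rw [min_eq_left hG1] at hmain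
          have hq : 24*ε/G = G := by
            rw [← hG2, sq, mul_div_assoc, div_self (ne_of_gt hG0), mul_one]
          rw [hq] at hmain
          nlinarith [hmain, hG2, hA0, ha0, hδ0]
        · nlinarith [hA2, hA0, ha0, h24gt, hδ0]
  by_contra hcon
  push_neg at hcon
  have hd0 : 0 < A1^2 - a^2 - 700*ε := by linarith
  have hH := H (min 1 ((A1^2 - a^2 - 700*ε)/60)) (by positivity) (min_le_left _ _)
  have h1 : 30 * min 1 ((A1^2 - a^2 - 700*ε)/60) ≤ (A1^2 - a^2 - 700*ε)/2 := by
    have := min_le_right 1 ((A1^2 - a^2 - 700*ε)/60)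
    linarith
  linarith

end scdl

/-- Hölder continuity of `SCDL` in the predictions. For a joint
(coupling) distribution `J` of `(p₁, p₂, y)` with marginals `D₁` of `(p₁, y)` and
`D₂` of `(p₂, y)`, `|SCDL(D₁)² - SCDL(D₂)²| ≤ C·E_J[|p₁ - p₂|]` and consequently
`|SCDL(D₁) - SCDL(D₂)| ≤ C'·√(E_J[|p₁ - p₂|])`, for absolute constants `C, C'`. -/
theorem SCDL_holder :
    ∃ C C' : ℝ, 0 < C ∧ 0 < C' ∧
      ∀ (α : Type) (J : Finset α) (ν : α → ℝ) (p₁ p₂ y : α → ℝ),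
        (∀ z ∈ J, 0 ≤ ν z) → (∑ z ∈ J, ν z = 1) →
        (∀ z ∈ J, p₁ z ∈ Set.Icc (0:ℝ) 1 ∧ p₂ z ∈ Set.Icc (0:ℝ) 1 ∧ (y z = 0 ∨ y z = 1)) →
        |(SCDL J ν p₁ y) ^ 2 - (SCDL J ν p₂ y) ^ 2| ≤ C * ∑ z ∈ J, ν z * |p₁ z - p₂ z|
        ∧ |SCDL J ν p₁ y - SCDL J ν p₂ y|
            ≤ C' * Real.sqrt (∑ z ∈ J, ν z * |p₁ z - p₂ z|) := by
  refine ⟨700, 700, by norm_num, by norm_num, ?_⟩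
  intro α J ν p₁ p₂ y hν hν1 hall
  have hp₁ : ∀ z ∈ J, p₁ z ∈ Set.Icc (0:ℝ) 1 := fun z hz => (hall z hz).1
  have hp₂ : ∀ z ∈ J, p₂ z ∈ Set.Icc (0:ℝ) 1 := fun z hz => (hall z hz).2.1
  have hy : ∀ z ∈ J, y z = 0 ∨ y z = 1 := fun z hz => (hall z hz).2.2
  set ε := ∑ z ∈ J, ν z * |p₁ z - p₂ z| with hεdef
  have hε0 : 0 ≤ ε := Finset.sum_nonneg fun z hz => mul_nonneg (hν z hz) (abs_nonneg _)
  have hsym : ∑ z ∈ J, ν z * |p₂ z - p₁ z| = ε :=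
    Finset.sum_congr rfl fun z _ => by rw [abs_sub_comm]
  have h1 := SCDL_sq_le hν hν1 hp₁ hp₂ hy
  have h2 := SCDL_sq_le hν hν1 hp₂ hp₁ hy
  rw [hsym] at h2
  set a := SCDL J ν p₁ y with hadef
  set b := SCDL J ν p₂ y with hbdef
  have ha0 : 0 ≤ a := SCDL_nonneg
  have hb0 : 0 ≤ b := SCDL_nonneg
  have habs : |a ^ 2 - b ^ 2| ≤ 700 * ε := abs_sub_le_iff.mpr ⟨by linarith, by linarith⟩
  refine ⟨habs, ?_⟩
  have key : (a - b)^2 ≤ 700 * ε := by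
    have h3 : |a - b| ≤ a + b := abs_le.mpr ⟨by linarith, by linarith⟩
    have h4 : |a^2 - b^2| = |a - b| * (a + b) := by
      rw [show a^2 - b^2 = (a-b)*(a+b) by ring, abs_mul, abs_of_nonneg (by linarith : 0 ≤ a + b)]
    calc (a-b)^2 = |a - b|^2 := (sq_abs _).symm
      _ = |a - b| * |a - b| := by rw [pow_two]
      _ ≤ |a - b| * (a+b) := mul_le_mul_of_nonneg_left h3 (abs_nonneg _)
      _ = |a^2 - b^2| := h4.symm
      _ ≤ 700*ε := habs
  have h5 : |a - b| ≤ Real.sqrt (700*ε) := by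
    rw [← Real.sqrt_sq_eq_abs]
    exact Real.sqrt_le_sqrt key
  have h6 : Real.sqrt (700*ε) = Real.sqrt 700 * Real.sqrt ε := Real.sqrt_mul (by norm_num) ε
  have h7 : Real.sqrt 700 ≤ 700 := by
    have h := Real.sqrt_le_sqrt (show (700:ℝ) ≤ 700^2 by norm_num)
    rwa [Real.sqrt_sq (by norm_num : (0:ℝ) ≤ 700)] at h
  calc |a - b| ≤ Real.sqrt 700 * Real.sqrt ε := by rw [← h6]; exact h5
    _ ≤ 700 * Real.sqrt ε := mul_le_mul_of_nonneg_right h7 (Real.sqrt_nonneg _)
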